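/- Let A be a G-algebra. Then G ⋊̂ (A ⋊ G) ≅ M_G ⊗ A naturally as G-algebras, via T(χ_g ⋊ a ⋊ s) = g·a ⊗ e_{g,gs}, with inverse S(a ⊗ e_{r,t}) = χ_r ⋊ r⁻¹·a ⋊ r⁻¹t. -/

import Mathlib

section

variable {R G A : Type*} [CommRing R] [Group G] [DecidableEq G] [NonUnitalRing A]
  [Module R A] [DistribMulAction G A] [SMulCommClass G R A]

/-- Crossed product multiplication on `A ⋊ G ≅ (G →₀ A)`: `(a⋊g)(b⋊h) = a(g·b) ⋊ gh`. -/
noncomputable def crossedMul (x y : G →₀ A) : G →₀ A :=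
  Finsupp.sum x fun g a => Finsupp.sum y fun h b => Finsupp.single (g * h) (a * g • b)

/-- Multiplication of `G ⋊̂ (A ⋊ G)`, modelled on `G →₀ (G →₀ A)` (the element
`χ_g ⋊ c` being `single g c`, with `c ∈ A ⋊ G`): `(χ_g ⋊ c)(χ_h ⋊ d) = χ_g ⋊ c_{g⁻¹h}·d`,
where `c_k = (c k) ⋊ k` is the degree-`k` homogeneous component of `c` in `A ⋊ G`. -/
noncomputable def hatCrossedMul (x y : G →₀ (G →₀ A)) : G →₀ (G →₀ A) :=
  Finsupp.sum x fun g c => Finsupp.sum y fun h d =>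
    Finsupp.single g (crossedMul (Finsupp.single (g⁻¹ * h) (c (g⁻¹ * h))) d)

/-- The `G`-action on `G ⋊̂ (A ⋊ G)`: `s·(χ_g ⋊ c) = χ_{sg} ⋊ c`. -/
noncomputable def hatCrossedAct (s : G) (x : G →₀ (G →₀ A)) : G →₀ (G →₀ A) :=
  Finsupp.mapDomain (fun g => s * g) x

/-- Multiplication on `M_G ⊗ A`, modelled as `(G × G) →₀ A`
(the element `a ⊗ e_{u,v}` being `single (u,v) a`). -/
noncomputable def matAMul (x y : (G × G) →₀ A) : (G × G) →₀ A :=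
  Finsupp.sum x fun pq a => Finsupp.sum y fun rs b =>
    if pq.2 = rs.1 then Finsupp.single (pq.1, rs.2) (a * b) else 0

/-- The diagonal `G`-action on `M_G ⊗ A ≅ (G × G) →₀ A`, `g·e_{s,t} = e_{gs,gt}`. -/
noncomputable def diagAct (g : G) (x : (G × G) →₀ A) : (G × G) →₀ A :=
  Finsupp.sum x fun pq a => Finsupp.single (g * pq.1, g * pq.2) (g • a)

-- auxiliary
set_option linter.unusedSectionVars false
open Finsupp

noncomputable def Tmap : (G →₀ (G →₀ A)) →ₗ[R] ((G × G) →₀ A) :=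
  Finsupp.lsum R fun g => Finsupp.lsum R fun s =>
    (Finsupp.lsingle (g, g * s)).comp (DistribMulAction.toLinearMap R A g)

noncomputable def Smap : ((G × G) →₀ A) →ₗ[R] (G →₀ (G →₀ A)) :=
  Finsupp.lsum R fun p =>
    (Finsupp.lsingle p.1).comp ((Finsupp.lsingle (p.1⁻¹ * p.2)).comp
      (DistribMulAction.toLinearMap R A p.1⁻¹))

@[simp] lemma Tmap_single (g s : G) (a : A) :
    Tmap (R := R) (single g (single s a)) = single (g, g * s) (g • a) := by
  unfold Tmap; simp only [Finsupp.lsum_single]; rfl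

@[simp] lemma Smap_single (r t : G) (a : A) :
    Smap (R := R) (single (r, t) a) = single r (single (r⁻¹ * t) (r⁻¹ • a)) := by
  simp [Smap]; rfl

lemma Tmap_single' (g : G) (c : G →₀ A) :
    Tmap (R := R) (single g c) = c.sum fun t a => single (g, g * t) (g • a) := by
  unfold Tmap; simp only [Finsupp.lsum_single]; rfl

lemma matAMul_single_single (p q : G × G) (a b : A) :
    matAMul (Finsupp.single p a) (Finsupp.single q b) =
      if p.2 = q.1 then Finsupp.single (p.1, q.2) (a * b) else 0 := by
  unfold matAMul
  rw [Finsupp.sum_single_index, Finsupp.sum_single_index]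
  · simp
  · simp

noncomputable def matAMulLeftHom (y : (G × G) →₀ A) : ((G × G) →₀ A) →+ ((G × G) →₀ A) where
  toFun x := matAMul x y
  map_zero' := Finsupp.sum_zero_index
  map_add' x x' := by
    show matAMul (x + x') y = matAMul x y + matAMul x' y
    unfold matAMul
    refine Finsupp.sum_add_index' (fun p => by simp) (fun p a a' => ?_)
    rw [← Finsupp.sum_add]
    congr 1; funext q b
    split_ifs <;> simp [add_mul, Finsupp.single_add]

noncomputable def matAMulRightHom (x : (G × G) →₀ A) : ((G × G) →₀ A) →+ ((G × G) →₀ A) where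
  toFun y := matAMul x y
  map_zero' := by
    unfold matAMul
    simp
  map_add' y y' := by
    show matAMul x (y + y') = matAMul x y + matAMul x y'
    unfold matAMul
    rw [← Finsupp.sum_add]
    congr 1; funext p a
    refine Finsupp.sum_add_index' (fun q => by simp) (fun q b b' => ?_)
    split_ifs <;> simp [mul_add, Finsupp.single_add]

@[simp] lemma matAMulLeftHom_apply (y x : (G × G) →₀ A) : matAMulLeftHom y x = matAMul x y := rfl
@[simp] lemma matAMulRightHom_apply (x y : (G × G) →₀ A) : matAMulRightHom x y = matAMul x y := rfl

noncomputable def diagActHom (s : G) : ((G × G) →₀ A) →+ ((G × G) →₀ A) where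
  toFun x := diagAct s x
  map_zero' := Finsupp.sum_zero_index
  map_add' x x' := by
    show diagAct s (x + x') = diagAct s x + diagAct s x'
    unfold diagAct
    exact Finsupp.sum_add_index' (fun p => by simp) (fun p a a' => by
      simp [smul_add, Finsupp.single_add])

@[simp] lemma diagActHom_apply (s : G) (x : (G × G) →₀ A) : diagActHom s x = diagAct s x := rfl

lemma key_term (hmul : ∀ (g : G) (a b : A), g • (a * b) = (g • a) * (g • b))
    (g h : G) (c d : G →₀ A) :
    Tmap (R := R) (single g (crossedMul (single (g⁻¹ * h) (c (g⁻¹ * h))) d))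
      = matAMul (Tmap (R := R) (single g c)) (Tmap (R := R) (single h d)) := by
  set k := g⁻¹ * h with hkdef
  have hk : g * k = h := by rw [hkdef, mul_inv_cancel_left]
  have h1 : crossedMul (single k (c k)) d = d.sum fun t b => single (k * t) (c k * k • b) := by
    unfold crossedMul
    rw [Finsupp.sum_single_index]
    simp
  rw [h1]
  rw [show (single g (d.sum fun t b => single (k * t) (c k * k • b)) : G →₀ (G →₀ A))
      = d.sum fun t b => single g (single (k * t) (c k * k • b)) from
    map_finsuppSum (Finsupp.singleAddHom g) d _]
  rw [map_finsuppSum]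
  rw [Tmap_single' h d]
  rw [show matAMul (Tmap (R := R) (single g c)) (d.sum fun t b => single (h, h * t) (h • b))
      = d.sum fun t b => matAMul (Tmap (R := R) (single g c)) (single (h, h * t) (h • b)) from
    map_finsuppSum (matAMulRightHom _) d _]
  refine Finsupp.sum_congr fun t _ => ?_
  -- per-term
  rw [Tmap_single g (k * t)]
  rw [Tmap_single' g c]
  rw [show matAMul (c.sum fun s a => single (g, g * s) (g • a)) (single (h, h * t) (h • (d t)))
      = c.sum fun s a => matAMul (single (g, g * s) (g • a)) (single (h, h * t) (h • (d t))) from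
    map_finsuppSum (matAMulLeftHom _) c _]
  have h2 : (c.sum fun s a => matAMul (single (g, g * s) (g • a)) (single (h, h * t) (h • (d t))))
      = c.sum fun s a => if s = k then single (g, h * t) ((g • a) * (h • d t)) else 0 := by
    refine Finsupp.sum_congr fun s _ => ?_
    rw [matAMul_single_single]
    have : (g * s = h) = (s = k) := by
      refine propext ⟨fun e => ?_, fun e => ?_⟩
      · rw [hkdef, ← e, inv_mul_cancel_left]
      · rw [e, hk]
    simp only [this]
  rw [h2, Finsupp.sum_ite_eq']
  have hval : (g • (c k * k • (d t))) = (g • c k) * (h • d t) := by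
    rw [hmul, ← mul_smul, hk]
  have harg : g * (k * t) = h * t := by rw [← mul_assoc, hk]
  by_cases hks : k ∈ c.support
  · rw [if_pos hks, harg, hval]
  · rw [if_neg hks]
    have : c k = 0 := Finsupp.notMem_support_iff.mp hks
    simp [this]

lemma mul_comp (hmul : ∀ (g : G) (a b : A), g • (a * b) = (g • a) * (g • b))
    (x y : G →₀ (G →₀ A)) :
    Tmap (R := R) (hatCrossedMul x y) = matAMul (Tmap (R := R) x) (Tmap (R := R) y) := by
  unfold hatCrossedMul
  rw [map_finsuppSum]
  have step1 : (x.sum fun g c => Tmap (R := R) (y.sum fun h d =>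
        single g (crossedMul (single (g⁻¹ * h) (c (g⁻¹ * h))) d)))
      = x.sum fun g c => y.sum fun h d =>
        matAMul (Tmap (R := R) (single g c)) (Tmap (R := R) (single h d)) := by
    refine Finsupp.sum_congr fun g _ => ?_
    rw [map_finsuppSum]
    exact Finsupp.sum_congr fun h _ => key_term hmul g h (x g) (y h)
  rw [step1]
  conv_rhs => rw [← Finsupp.sum_single x, ← Finsupp.sum_single y,
    map_finsuppSum (Tmap (R := R)) x, map_finsuppSum (Tmap (R := R)) y]
  rw [show matAMul (x.sum fun g c => Tmap (R := R) (single g c))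
        (y.sum fun h d => Tmap (R := R) (single h d))
      = x.sum fun g c => matAMul (Tmap (R := R) (single g c))
        (y.sum fun h d => Tmap (R := R) (single h d)) from
    map_finsuppSum (matAMulLeftHom _) x _]
  refine Finsupp.sum_congr fun g _ => ?_
  exact (map_finsuppSum (matAMulRightHom (Tmap (R := R) (single g (x g)))) y
    (fun h d => Tmap (R := R) (single h d))).symm

lemma act_comp (s : G) (x : G →₀ (G →₀ A)) :
    Tmap (R := R) (hatCrossedAct s x) = diagAct s (Tmap (R := R) x) := by
  unfold hatCrossedAct
  rw [show (Finsupp.mapDomain (fun g => s * g) x : G →₀ (G →₀ A))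
      = x.sum fun g c => single (s * g) c from rfl]
  rw [map_finsuppSum]
  have lhs : (x.sum fun g c => Tmap (R := R) (single (s * g) c))
      = x.sum fun g c => c.sum fun t a => single (s * g, s * g * t) ((s * g) • a) := by
    exact Finsupp.sum_congr fun g _ => Tmap_single' (s * g) (x g)
  rw [lhs]
  conv_rhs => rw [← Finsupp.sum_single x, map_finsuppSum (Tmap (R := R)) x]
  rw [show diagAct s (x.sum fun g c => Tmap (R := R) (single g c))
      = x.sum fun g c => diagAct s (Tmap (R := R) (single g c)) from
    map_finsuppSum (diagActHom s) x _]
  refine Finsupp.sum_congr fun g _ => ?_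
  rw [Tmap_single' g (x g)]
  rw [show diagAct s ((x g).sum fun t a => single (g, g * t) (g • a))
      = (x g).sum fun t a => diagAct s (single (g, g * t) (g • a)) from
    map_finsuppSum (diagActHom s) (x g) _]
  refine Finsupp.sum_congr fun t _ => ?_
  unfold diagAct
  rw [Finsupp.sum_single_index (by simp)]
  rw [mul_assoc, mul_smul]

/-- Let `A` be a `G`-algebra. Then `G ⋊̂ (A ⋊ G) ≅ M_G ⊗ A` naturally as
`G`-algebras, via `T(χ_g ⋊ a ⋊ s) = g·a ⊗ e_{g,gs}`, with inverse
`S(a ⊗ e_{r,t}) = χ_r ⋊ r⁻¹·a ⋊ r⁻¹t`. -/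
theorem dual_crossed_crossed_iso_matrices
    (hmul : ∀ (g : G) (a b : A), g • (a * b) = (g • a) * (g • b)) :
    ∃ e : (G →₀ (G →₀ A)) ≃ₗ[R] ((G × G) →₀ A),
      (∀ (g s : G) (a : A),
        e (Finsupp.single g (Finsupp.single s a)) = Finsupp.single (g, g * s) (g • a)) ∧
      (∀ (r t : G) (a : A),
        e.symm (Finsupp.single (r, t) a) =
          Finsupp.single r (Finsupp.single (r⁻¹ * t) (r⁻¹ • a))) ∧
      (∀ x y : G →₀ (G →₀ A), e (hatCrossedMul x y) = matAMul (e x) (e y)) ∧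
      (∀ (s : G) (x : G →₀ (G →₀ A)), e (hatCrossedAct s x) = diagAct s (e x)) := by
  refine ⟨LinearEquiv.ofLinear Tmap Smap ?_ ?_, ?_, ?_, ?_, ?_⟩
  · apply Finsupp.lhom_ext; intro p a
    obtain ⟨r, t⟩ := p
    simp [mul_inv_cancel_left, smul_smul]
  · refine Finsupp.lhom_ext' fun g => ?_
    apply Finsupp.lhom_ext; intro t a
    simp [inv_mul_cancel_left, inv_smul_smul]
  · intro g t a; exact Tmap_single g t a
  · intro r t a; exact Smap_single r t a
  · intro x y; exact mul_comp hmul x y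
  · intro s x; exact act_comp s x

end
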